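/- (Sampled matrix multiplication.) Let A ∈ ℝ^{d×m} and B ∈ ℝ^{n×m} with A ≠ 0, and let a sampling budget k ≥ 1 be given. Then there exists a choice of indices i_1,...,i_k ∈ {1,...,m} (with a_{i_j} := A e_{i_j} ≠ 0) such that, setting M := (‖A‖_F²/k) Σ_{j=1}^k e_{i_j} e_{i_j}^T / ‖A e_{i_j}‖², one has ‖A B^T − A M B^T‖_F² ≤ (1/k) ‖A‖_F² ‖B‖_F². -/

import Mathlib

open Matrix
noncomputable def frob {α β : Type*} [Fintype α] [Fintype β] (A : Matrix α β ℝ) : ℝ :=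
  Real.sqrt (∑ i, ∑ j, (A i j) ^ 2)

noncomputable def colNorm {α β : Type*} [Fintype α] (A : Matrix α β ℝ) (j : β) : ℝ :=
  Real.sqrt (∑ i, (A i j) ^ 2)

lemma frob_sq {α β : Type*} [Fintype α] [Fintype β] (A : Matrix α β ℝ) :
    frob A ^ 2 = ∑ i, ∑ j, (A i j) ^ 2 := by
  rw [frob, Real.sq_sqrt]; positivity

lemma colNorm_sq {α β : Type*} [Fintype α] (A : Matrix α β ℝ) (j : β) :
    colNorm A j ^ 2 = ∑ i, (A i j) ^ 2 := by
  rw [colNorm, Real.sq_sqrt]; positivity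

lemma frob_sq_col {α β : Type*} [Fintype α] [Fintype β] (A : Matrix α β ℝ) :
    frob A ^ 2 = ∑ j, colNorm A j ^ 2 := by
  rw [frob_sq, Finset.sum_comm]
  exact Finset.sum_congr rfl fun j _ => (colNorm_sq A j).symm

lemma colNorm_zero_entry {α β : Type*} [Fintype α] (A : Matrix α β ℝ) (j : β)
    (h : colNorm A j = 0) (i : α) : A i j = 0 := by
  have h2 : (∑ i, (A i j) ^ 2) = 0 := by
    have := colNorm_sq A j
    rw [h] at this; simpa using this.symm
  have h3 := (Finset.sum_eq_zero_iff_of_nonneg (fun i _ => by positivity)).1 h2 i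
    (Finset.mem_univ i)
  exact pow_eq_zero_iff (n := 2) (by norm_num) |>.1 h3

/-- Core expectation identity over i.i.d. samples. -/
lemma exp_lemma {k m : ℕ} (β e : Fin m → ℝ) (hβ : ∑ i, β i = 1)
    (he : ∑ i, β i * e i = 0) :
    ∑ σ : Fin k → Fin m, (∏ j, β (σ j)) * (∑ j, e (σ j)) ^ 2
      = (k : ℝ) * ∑ i, β i * e i ^ 2 := by
  classical
  have key : ∀ j j' : Fin k,
      (∑ σ : Fin k → Fin m, (∏ l, β (σ l)) * (e (σ j) * e (σ j')))
        = if j = j' then ∑ i, β i * e i ^ 2 else 0 := by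
    intro j j'
    have h1 : ∀ σ : Fin k → Fin m,
        (∏ l, β (σ l)) * (e (σ j) * e (σ j'))
          = ∏ l, (β (σ l) * ((if l = j then e (σ l) else 1)
              * (if l = j' then e (σ l) else 1))) := by
      intro σ
      rw [Finset.prod_mul_distrib, Finset.prod_mul_distrib,
        Finset.prod_ite_eq', Finset.prod_ite_eq']
      simp
    rw [Finset.sum_congr rfl fun σ _ => h1 σ]
    have h2 : (∑ σ : Fin k → Fin m, ∏ l, (β (σ l) * ((if l = j then e (σ l) else 1)
            * (if l = j' then e (σ l) else 1))))
        = ∏ l : Fin k, ∑ i : Fin m, (β i * ((if l = j then e i else 1)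
            * (if l = j' then e i else 1))) := by
      rw [Finset.prod_univ_sum, Fintype.piFinset_univ]
    rw [h2]
    by_cases hjj : j = j'
    · subst hjj
      have h3 : ∀ l : Fin k, (∑ i, β i * ((if l = j then e i else 1)
            * (if l = j then e i else 1)))
          = if l = j then ∑ i, β i * e i ^ 2 else 1 := by
        intro l
        by_cases hl : l = j
        · simp only [if_pos hl]
          exact Finset.sum_congr rfl fun i _ => by ring
        · simp [hl, hβ]
      rw [Finset.prod_congr rfl fun l _ => h3 l, Finset.prod_ite_eq']
      simp
    · rw [if_neg hjj]
      apply Finset.prod_eq_zero (Finset.mem_univ j)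
      simpa [hjj] using he
  have expand : ∀ σ : Fin k → Fin m,
      (∏ j, β (σ j)) * (∑ j, e (σ j)) ^ 2
        = ∑ j : Fin k, ∑ j' : Fin k, (∏ l, β (σ l)) * (e (σ j) * e (σ j')) := by
    intro σ
    rw [pow_two, Finset.sum_mul_sum, Finset.mul_sum]
    exact Finset.sum_congr rfl fun j _ => Finset.mul_sum _ _ _
  calc ∑ σ : Fin k → Fin m, (∏ j, β (σ j)) * (∑ j, e (σ j)) ^ 2
      = ∑ j : Fin k, ∑ j' : Fin k, ∑ σ : Fin k → Fin m,
          (∏ l, β (σ l)) * (e (σ j) * e (σ j')) := by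
        rw [Finset.sum_congr rfl fun σ _ => expand σ, Finset.sum_comm]
        exact Finset.sum_congr rfl fun j _ => Finset.sum_comm
    _ = ∑ j : Fin k, ∑ j' : Fin k, if j = j' then ∑ i, β i * e i ^ 2 else 0 :=
        Finset.sum_congr rfl fun j _ => Finset.sum_congr rfl fun j' _ => key j j'
    _ = (k : ℝ) * ∑ i, β i * e i ^ 2 := by
        simp [Finset.sum_ite_eq, mul_comm]

/-- Importance-sampled matrix multiplication. -/
theorem sampled_matrix_mult {d m n : ℕ}
    (A : Matrix (Fin d) (Fin m) ℝ) (B : Matrix (Fin n) (Fin m) ℝ)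
    (hA : A ≠ 0) (k : ℕ) (hk : 1 ≤ k) :
    ∃ idx : Fin k → Fin m,
      (∀ j, (fun i => A i (idx j)) ≠ 0) ∧
      frob (A * Bᵀ - A *
          ((frob A ^ 2 / k) •
            ∑ j, (1 / colNorm A (idx j) ^ 2) •
              Matrix.single (idx j) (idx j) (1 : ℝ)) * Bᵀ) ^ 2
        ≤ (1 / (k : ℝ)) * frob A ^ 2 * frob B ^ 2 := by
  classical
  set F := frob A ^ 2 with hFdef
  have hF : 0 < F := by
    obtain ⟨p, q, hpq⟩ : ∃ p q, A p q ≠ 0 := by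
      by_contra h; push_neg at h
      exact hA (by ext p q; simp [h])
    rw [hFdef, frob_sq]
    refine Finset.sum_pos' (fun i _ => Finset.sum_nonneg fun j _ => by positivity)
      ⟨p, Finset.mem_univ p, Finset.sum_pos' (fun j _ => by positivity)
        ⟨q, Finset.mem_univ q, by positivity⟩⟩
  have hkpos : (0:ℝ) < k := by exact_mod_cast hk
  have hk0 : (k:ℝ) ≠ 0 := ne_of_gt hkpos
  set β : Fin m → ℝ := fun i => colNorm A i ^ 2 / F with hβdef
  have hβ0 : ∀ i, 0 ≤ β i := fun i => div_nonneg (by positivity) hF.le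
  have hβ1 : ∑ i, β i = 1 := by
    simp only [hβdef]
    rw [← Finset.sum_div, ← frob_sq_col A, ← hFdef, div_self hF.ne']
  set g : Fin m → Fin d → Fin n → ℝ :=
    fun i p q => F * (A p i * B q i) / colNorm A i ^ 2 with hgdef
  have hβg : ∀ i p q, β i * g i p q = A p i * B q i := by
    intro i p q
    by_cases hc : colNorm A i = 0
    · have hz : A p i = 0 := colNorm_zero_entry A i hc p
      simp [hβdef, hgdef, hc, hz]
    · have hc2 : colNorm A i ^ 2 ≠ 0 := pow_ne_zero _ hc
      simp only [hβdef, hgdef]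
      field_simp
  set C : Matrix (Fin d) (Fin n) ℝ := A * Bᵀ with hCdef
  have hCapp : ∀ p q, C p q = ∑ i, A p i * B q i := by
    intro p q; simp [hCdef, Matrix.mul_apply]
  have hsum_g : ∀ p q, ∑ i, β i * g i p q = C p q := by
    intro p q; rw [hCapp]
    exact Finset.sum_congr rfl fun i _ => hβg i p q
  set e : Fin d → Fin n → Fin m → ℝ := fun p q i => C p q - g i p q with hedef
  have hesum : ∀ p q, ∑ i, β i * e p q i = 0 := by
    intro p q
    simp only [hedef, mul_sub]
    rw [Finset.sum_sub_distrib, ← Finset.sum_mul, hβ1, hsum_g, one_mul, sub_self]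
  set w : (Fin k → Fin m) → ℝ := fun σ => ∏ j, β (σ j) with hwdef
  have hw0 : ∀ σ, 0 ≤ w σ := fun σ => Finset.prod_nonneg fun j _ => hβ0 _
  have hw1 : ∑ σ : Fin k → Fin m, w σ = 1 := by
    simp only [hwdef]
    rw [← Fintype.piFinset_univ, ← Finset.prod_univ_sum]
    simp [hβ1]
  have hM : ∀ σ : Fin k → Fin m, ∀ p q,
      (A * ((F / (k:ℕ)) • ∑ j, (1 / colNorm A (σ j) ^ 2) •
          Matrix.single (σ j) (σ j) (1 : ℝ)) * Bᵀ) p q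
        = (1 / (k:ℝ)) * ∑ j, g (σ j) p q := by
    intro σ p q
    have hstd : ∀ i : Fin m,
        (A * Matrix.single i i (1:ℝ) * Bᵀ) p q = A p i * B q i := by
      intro i
      simp [Matrix.mul_apply, Matrix.single, ite_and, Finset.sum_ite_eq]
    rw [Matrix.mul_smul, Matrix.smul_mul, Matrix.mul_sum, Matrix.sum_mul]
    simp only [Matrix.smul_apply, Matrix.sum_apply, Matrix.mul_smul, Matrix.smul_mul,
      smul_eq_mul]
    rw [Finset.mul_sum, Finset.mul_sum]
    refine Finset.sum_congr rfl fun j _ => ?_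
    rw [hstd (σ j)]
    simp only [hgdef]
    ring
  set err : (Fin k → Fin m) → ℝ :=
    fun σ => ∑ p, ∑ q, (C p q - (1/(k:ℝ)) * ∑ j, g (σ j) p q) ^ 2 with herrdef
  have hentry : ∀ (σ : Fin k → Fin m) p q,
      (C p q - (1/(k:ℝ)) * ∑ j, g (σ j) p q) ^ 2
        = (1/(k:ℝ))^2 * (∑ j, e p q (σ j)) ^ 2 := by
    intro σ p q
    have hsum : ∑ j, e p q (σ j) = (k:ℝ) * C p q - ∑ j, g (σ j) p q := by
      simp only [hedef]
      rw [Finset.sum_sub_distrib, Finset.sum_const, Finset.card_univ, Fintype.card_fin,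
        nsmul_eq_mul]
    rw [hsum]
    field_simp
  have hpq : ∀ p q, ∑ σ : Fin k → Fin m,
        w σ * (C p q - (1/(k:ℝ)) * ∑ j, g (σ j) p q) ^ 2
      ≤ (1/(k:ℝ)) * ∑ i, β i * g i p q ^ 2 := by
    intro p q
    have h2 : ∑ σ : Fin k → Fin m, w σ * (C p q - (1/(k:ℝ)) * ∑ j, g (σ j) p q) ^ 2
        = (1/(k:ℝ))^2 * ∑ σ : Fin k → Fin m, w σ * (∑ j, e p q (σ j)) ^ 2 := by
      rw [Finset.mul_sum]
      refine Finset.sum_congr rfl fun σ _ => ?_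
      rw [hentry σ p q]; ring
    have h4 : ∑ σ : Fin k → Fin m, w σ * (∑ j, e p q (σ j)) ^ 2
        = (k:ℝ) * ∑ i, β i * e p q i ^ 2 := by
      simp only [hwdef]
      exact exp_lemma β (e p q) hβ1 (hesum p q)
    rw [h2, h4]
    have h3 : ∑ i, β i * e p q i ^ 2 ≤ ∑ i, β i * g i p q ^ 2 := by
      have hexp2 : ∑ i, β i * e p q i ^ 2
          = ∑ i, β i * g i p q ^ 2 - C p q ^ 2 := by
        have expand : ∀ i, β i * e p q i ^ 2
            = β i * g i p q ^ 2 - 2 * C p q * (β i * g i p q) + C p q ^ 2 * β i := by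
          intro i; simp only [hedef]; ring
        rw [Finset.sum_congr rfl fun i _ => expand i, Finset.sum_add_distrib,
          Finset.sum_sub_distrib, ← Finset.mul_sum, ← Finset.mul_sum, hsum_g, hβ1]
        ring
      nlinarith [sq_nonneg (C p q)]
    have h5 : (1/(k:ℝ))^2 * ((k:ℝ) * ∑ i, β i * e p q i ^ 2)
        = (1/(k:ℝ)) * ∑ i, β i * e p q i ^ 2 := by
      field_simp
    rw [h5]
    exact mul_le_mul_of_nonneg_left h3 (by positivity)
  have key2 : ∀ i, β i * ∑ p, ∑ q, g i p q ^ 2 ≤ F * colNorm B i ^ 2 := by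
    intro i
    by_cases hc : colNorm A i = 0
    · simp only [hβdef, hc]
      simp
      positivity
    · have hc2 : colNorm A i ^ 2 ≠ 0 := pow_ne_zero _ hc
      have hgg : ∑ p, ∑ q, g i p q ^ 2
          = F^2 / (colNorm A i ^ 2)^2 * ((∑ p, A p i ^ 2) * (∑ q, B q i ^ 2)) := by
        rw [Finset.sum_mul_sum, Finset.mul_sum]
        refine Finset.sum_congr rfl fun p _ => ?_
        rw [Finset.mul_sum]
        refine Finset.sum_congr rfl fun q _ => ?_
        simp only [hgdef]
        ring
      rw [hgg, ← colNorm_sq A, ← colNorm_sq B]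
      simp only [hβdef]
      have heq : colNorm A i ^ 2 / F
            * (F ^ 2 / (colNorm A i ^ 2) ^ 2 * (colNorm A i ^ 2 * colNorm B i ^ 2))
          = F * colNorm B i ^ 2 := by
        field_simp
      rw [heq]
  have hexp : ∑ σ : Fin k → Fin m, w σ * err σ ≤ (1/(k:ℝ)) * F * frob B ^ 2 := by
    have hswap : ∑ σ : Fin k → Fin m, w σ * err σ
        = ∑ p, ∑ q, ∑ σ : Fin k → Fin m,
            w σ * (C p q - (1/(k:ℝ)) * ∑ j, g (σ j) p q) ^ 2 := by
      simp only [herrdef, Finset.mul_sum]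
      rw [Finset.sum_comm]
      exact Finset.sum_congr rfl fun p _ => Finset.sum_comm
    rw [hswap]
    calc ∑ p, ∑ q, ∑ σ : Fin k → Fin m,
            w σ * (C p q - (1/(k:ℝ)) * ∑ j, g (σ j) p q) ^ 2
        ≤ ∑ p, ∑ q, (1/(k:ℝ)) * ∑ i, β i * g i p q ^ 2 :=
          Finset.sum_le_sum fun p _ => Finset.sum_le_sum fun q _ => hpq p q
      _ = (1/(k:ℝ)) * ∑ i, β i * ∑ p, ∑ q, g i p q ^ 2 := by
          simp only [Finset.mul_sum]
          rw [Finset.sum_congr rfl fun p _ => Finset.sum_comm, Finset.sum_comm]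
      _ ≤ (1/(k:ℝ)) * ∑ i, F * colNorm B i ^ 2 := by
          refine mul_le_mul_of_nonneg_left (Finset.sum_le_sum fun i _ => key2 i)
            (by positivity)
      _ = (1/(k:ℝ)) * F * frob B ^ 2 := by
          rw [← Finset.mul_sum, ← frob_sq_col B, mul_assoc]
  obtain ⟨σ, hσw, hσerr⟩ :
      ∃ σ : Fin k → Fin m, w σ ≠ 0 ∧ err σ ≤ (1/(k:ℝ)) * F * frob B ^ 2 := by
    by_contra hcon
    push_neg at hcon
    have hne : ∃ σ : Fin k → Fin m, w σ ≠ 0 := by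
      by_contra h; push_neg at h
      rw [Finset.sum_eq_zero (fun σ _ => h σ)] at hw1
      exact one_ne_zero hw1.symm
    obtain ⟨σ0, hσ0⟩ := hne
    have hlt : ((1/(k:ℝ)) * F * frob B ^ 2) * ∑ σ : Fin k → Fin m, w σ
        < ∑ σ : Fin k → Fin m, w σ * err σ := by
      rw [Finset.mul_sum]
      refine Finset.sum_lt_sum (fun σ _ => ?_) ⟨σ0, Finset.mem_univ σ0, ?_⟩
      · by_cases hσ : w σ = 0
        · simp [hσ]
        · have hwpos : 0 < w σ := lt_of_le_of_ne (hw0 σ) (Ne.symm hσ)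
          have := hcon σ hσ
          nlinarith
      · have hwpos : 0 < w σ0 := lt_of_le_of_ne (hw0 σ0) (Ne.symm hσ0)
        have := hcon σ0 hσ0
        nlinarith
    rw [hw1, mul_one] at hlt
    linarith
  refine ⟨σ, ?_, ?_⟩
  · intro j hcol
    apply hσw
    simp only [hwdef]
    refine Finset.prod_eq_zero (Finset.mem_univ j) ?_
    have hcz : colNorm A (σ j) = 0 := by
      rw [colNorm]
      have : ∀ i, A i (σ j) = 0 := fun i => congrFun hcol i
      simp [this]
    simp [hβdef, hcz]
  · have hfr : frob (C - A *
          ((F / (k:ℕ)) • ∑ j, (1 / colNorm A (σ j) ^ 2) •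
            Matrix.single (σ j) (σ j) (1 : ℝ)) * Bᵀ) ^ 2 = err σ := by
      rw [frob_sq]
      simp only [herrdef]
      refine Finset.sum_congr rfl fun p _ => Finset.sum_congr rfl fun q _ => ?_
      rw [Matrix.sub_apply, hM σ p q]
    rw [hfr]
    exact hσerr
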